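/- Majority vote excess risk bound: let Y = {0,…,M−1} be a finite label set with M classes, (f_i)_{1≤i≤V} classifiers X → Y, and f^mv a majority-vote classifier: for all x, f^mv(x) maximizes over y ∈ Y the count |{i : f_i(x) = y}|. Then the 0–1 excess risk satisfies ℓ(s, f^mv) ≤ (M/V) · Σ_{i=1}^V ℓ(s, f_i), where s is a Bayes classifier. -/

import Mathlib

open MeasureTheory

/-- Proposition (maj_vote), excess risk: with `M` classes, conditional probabilities
`η y x = P(Y = y | X = x)`, Bayes classifier `s`, classifiers `f₁,…,f_V` and a majority
vote `fmv`, the 0-1 excess risk `ℓ t = E[η_{s(X)}(X) - η_{t(X)}(X)]` satisfies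
`ℓ fmv ≤ (M/V) ∑ᵢ ℓ (fᵢ)`. -/
theorem stmt_14 {α : Type*} [MeasurableSpace α] (μ : Measure α) [IsProbabilityMeasure μ]
    (M V : ℕ) (hM : 0 < M) (hV : 0 < V)
    (η : Fin M → α → ℝ) (hηm : ∀ y, Measurable (η y))
    (hη : ∀ y x, η y x ∈ Set.Icc (0 : ℝ) 1)
    (hηsum : ∀ x, ∑ y, η y x = 1)
    (s : α → Fin M) (hsm : Measurable s) (hbayes : ∀ x y, η y x ≤ η (s x) x)
    (f : Fin V → α → Fin M) (hfm : ∀ i, Measurable (f i))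
    (fmv : α → Fin M) (hfmvm : Measurable fmv)
    (hmv : ∀ x y, (Finset.univ.filter fun i => f i x = y).card ≤
      (Finset.univ.filter fun i => f i x = fmv x).card)
    (excess : (α → Fin M) → ℝ)
    (hexcess : ∀ t : α → Fin M, excess t = ∫ x, (η (s x) x - η (t x) x) ∂μ) :
    excess fmv ≤ ((M : ℝ) / V) * ∑ i, excess (f i) := by
  have hmeas : ∀ t : α → Fin M, Measurable t → Measurable (fun x => η (t x) x) := by
    intro t ht
    have heq : (fun x => η (t x) x) = fun x => ∑ y, if t x = y then η y x else 0 := by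
      funext x
      simp [Finset.sum_ite_eq]
    rw [heq]
    exact Finset.measurable_sum _ fun y _ =>
      Measurable.ite (ht (measurableSet_singleton y)) (hηm y) measurable_const
  have hint : ∀ t : α → Fin M, Measurable t →
      Integrable (fun x => η (s x) x - η (t x) x) μ := by
    intro t ht
    apply (integrable_const (2 : ℝ)).mono'
      ((hmeas s hsm).sub (hmeas t ht)).aestronglyMeasurable
    filter_upwards with x
    have h1 := hη (s x) x
    have h2 := hη (t x) x
    simp only [Pi.sub_apply]
    rw [Real.norm_eq_abs, abs_le]
    constructor <;> nlinarith [h1.1, h1.2, h2.1, h2.2]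
  have hVpos : (0 : ℝ) < V := by exact_mod_cast hV
  have key : ∀ x, η (s x) x - η (fmv x) x ≤
      ((M : ℝ) / V) * ∑ i, (η (s x) x - η (f i x) x) := by
    intro x
    have hg0 : 0 ≤ η (s x) x - η (fmv x) x := sub_nonneg.2 (hbayes x _)
    set c := (Finset.univ.filter fun i => f i x = fmv x).card with hc
    have hVMc : V ≤ M * c := by
      have hcard : (Finset.univ : Finset (Fin V)).card =
          ∑ y : Fin M, (Finset.univ.filter fun i => f i x = y).card :=
        Finset.card_eq_sum_card_fiberwise (fun i _ => Finset.mem_univ (f i x))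
      calc V = (Finset.univ : Finset (Fin V)).card := by simp
        _ = ∑ y : Fin M, (Finset.univ.filter fun i => f i x = y).card := hcard
        _ ≤ ∑ _y : Fin M, c := Finset.sum_le_sum fun y _ => hmv x y
        _ = M * c := by simp [Finset.sum_const, Finset.card_univ, Nat.mul_comm]
    have hterm : ∀ i ∈ Finset.univ.filter fun i => f i x = fmv x,
        η (s x) x - η (f i x) x = η (s x) x - η (fmv x) x := by
      intro i hi
      rw [(Finset.mem_filter.1 hi).2]
    have hsum : (c : ℝ) * (η (s x) x - η (fmv x) x) ≤
        ∑ i, (η (s x) x - η (f i x) x) := by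
      have h1 : ∑ i ∈ Finset.univ.filter (fun i => f i x = fmv x),
          (η (s x) x - η (f i x) x) = (c : ℝ) * (η (s x) x - η (fmv x) x) := by
        rw [Finset.sum_congr rfl hterm, Finset.sum_const, nsmul_eq_mul]
      rw [← h1]
      exact Finset.sum_le_sum_of_subset_of_nonneg (Finset.subset_univ _)
        (fun i _ _ => sub_nonneg.2 (hbayes x _))
    rw [div_mul_eq_mul_div, le_div_iff₀ hVpos]
    have hMc : (V : ℝ) ≤ (M : ℝ) * c := by exact_mod_cast hVMc
    have hM0 : (0 : ℝ) ≤ M := Nat.cast_nonneg M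
    nlinarith [mul_le_mul_of_nonneg_left hsum hM0,
      mul_le_mul_of_nonneg_right hMc hg0]
  rw [hexcess]
  have hR : ((M : ℝ) / V) * ∑ i, excess (f i) =
      ∫ x, ((M : ℝ) / V) * ∑ i, (η (s x) x - η (f i x) x) ∂μ := by
    simp_rw [hexcess]
    rw [← integral_finset_sum _ (fun i _ => hint (f i) (hfm i)), ← integral_const_mul]
  rw [hR]
  exact integral_mono (hint fmv hfmvm)
    ((integrable_finset_sum _ (fun i _ => hint (f i) (hfm i))).const_mul _)
    key
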